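/- For every irrational real number x, the irrationality exponent satisfies μ(x) = 2 + limsup_{n→∞} (log a_{n+1}(x)) / (log q_n(x)), where a_n(x) are the regular continued fraction partial quotients and q_n(x) the convergent denominators. -/

import Mathlib

noncomputable def cfX (x : ℝ) : ℕ → ℝ
  | 0 => Int.fract x
  | n + 1 => Int.fract (1 / cfX x n)

/-- Regular continued fraction partial quotients: `rcfA x 0 = ⌊x⌋`, `rcfA x n` for `n ≥ 1`. -/
noncomputable def rcfA (x : ℝ) : ℕ → ℤ
  | 0 => ⌊x⌋
  | n + 1 => ⌊1 / cfX x n⌋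

/-- RCF convergent denominators: `q₀ = 1`, `q₁ = a₁`, `qₙ = aₙ qₙ₋₁ + qₙ₋₂`. -/
noncomputable def rcfQ (x : ℝ) : ℕ → ℤ
  | 0 => 1
  | 1 => rcfA x 1
  | n + 2 => rcfA x (n + 2) * rcfQ x (n + 1) + rcfQ x n

/-- Pairs `(p,q)` with `q ≥ 1`, `|p|` and `q` coprime, and `|x - p/q| < 1/q^μ`. -/
noncomputable def approxSet (x μ : ℝ) : Set (ℤ × ℕ) :=
  {pq | 0 < pq.2 ∧ Nat.Coprime pq.1.natAbs pq.2 ∧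
    |x - (pq.1 : ℝ) / (pq.2 : ℝ)| < 1 / (pq.2 : ℝ) ^ μ}

/-- The irrationality exponent of `x`. -/
noncomputable def irrExp (x : ℝ) : EReal :=
  sSup {e : EReal | ∃ μ : ℝ, e = (μ : EReal) ∧ (approxSet x μ).Infinite}

lemma cfX_irrational (x : ℝ) (hx : Irrational x) : ∀ n, Irrational (cfX x n) := by
  intro n
  induction n with
  | zero => simpa [cfX, Int.fract, sub_eq_add_neg] using hx.sub_intCast ⌊x⌋
  | succ n ih =>
    have h1 : Irrational (1 / cfX x n) := by
      simpa using ih.inv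
    simpa [cfX, Int.fract, sub_eq_add_neg] using h1.sub_intCast ⌊1 / cfX x n⌋

lemma cfX_pos (x : ℝ) (hx : Irrational x) : ∀ n, 0 < cfX x n ∧ cfX x n < 1 := by
  intro n
  have hirr := cfX_irrational x hx n
  have h0 : cfX x n = Int.fract (if n = 0 then x else 1 / cfX x (n-1)) := by
    cases n with
    | zero => simp [cfX]
    | succ m => simp [cfX]
  constructor
  · rcases lt_or_eq_of_le (Int.fract_nonneg (if n = 0 then x else 1 / cfX x (n-1))) with h | h
    · rw [h0]; exact h
    · exfalso; rw [h0] at hirr; rw [← h] at hirr; exact hirr ⟨0, by simp⟩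
  · rw [h0]; exact Int.fract_lt_one _

noncomputable def rcfP (x : ℝ) : ℕ → ℤ
  | 0 => rcfA x 0
  | 1 => rcfA x 1 * rcfA x 0 + 1
  | n + 2 => rcfA x (n + 2) * rcfP x (n + 1) + rcfP x n

noncomputable def rcfQp (x : ℝ) : ℕ → ℤ
  | 0 => 0
  | n + 1 => rcfQ x n

noncomputable def rcfPp (x : ℝ) : ℕ → ℤ
  | 0 => 1
  | n + 1 => rcfP x n

lemma rcfQ_rec (x : ℝ) (n : ℕ) :
    rcfQ x (n + 1) = rcfA x (n + 1) * rcfQ x n + rcfQp x n := by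
  cases n with
  | zero => simp [rcfQ, rcfQp]
  | succ m => simp [rcfQ, rcfQp]

lemma rcfP_rec (x : ℝ) (n : ℕ) :
    rcfP x (n + 1) = rcfA x (n + 1) * rcfP x n + rcfPp x n := by
  cases n with
  | zero => simp [rcfP, rcfPp]
  | succ m => simp [rcfP, rcfPp]

/-- α_{n+1} = 1 / cfX x n -/
noncomputable def alp (x : ℝ) (n : ℕ) : ℝ := 1 / cfX x n

lemma alp_gt_one (x : ℝ) (hx : Irrational x) (n : ℕ) : 1 < alp x n := by
  have h := cfX_pos x hx n
  rw [alp]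
  rw [lt_div_iff₀ h.1]
  linarith [h.2]

lemma alp_eq (x : ℝ) (n : ℕ) :
    alp x n = (rcfA x (n + 1) : ℝ) + cfX x (n + 1) := by
  have h1 : cfX x (n + 1) = Int.fract (1 / cfX x n) := rfl
  have h2 : rcfA x (n + 1) = ⌊1 / cfX x n⌋ := rfl
  rw [alp, h1, h2, Int.fract]
  ring

lemma alp_bounds (x : ℝ) (hx : Irrational x) (n : ℕ) :
    (rcfA x (n + 1) : ℝ) < alp x n ∧ alp x n < (rcfA x (n + 1) : ℝ) + 1 := by
  have h := cfX_pos x hx (n + 1)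
  rw [alp_eq]
  constructor <;> linarith [h.1, h.2]

lemma rcfA_pos (x : ℝ) (hx : Irrational x) (n : ℕ) : 1 ≤ rcfA x (n + 1) := by
  have h := cfX_pos x hx n
  have h2 : ((1 : ℤ) : ℝ) ≤ 1 / cfX x n := by
    rw [Int.cast_one, le_div_iff₀ h.1]; linarith [h.2]
  show (1 : ℤ) ≤ ⌊1 / cfX x n⌋
  exact Int.le_floor.mpr h2

lemma rcfQ_pos (x : ℝ) (hx : Irrational x) (n : ℕ) : 1 ≤ rcfQ x n := by
  induction n using Nat.strong_induction_on with
  | _ n ih =>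
    match n with
    | 0 => simp [rcfQ]
    | 1 => simpa [rcfQ] using rcfA_pos x hx 0
    | n + 2 =>
      have h1 := ih (n+1) (by omega)
      have h2 := ih n (by omega)
      have h3 := rcfA_pos x hx (n+1)
      rw [rcfQ]
      nlinarith

lemma rcfQp_nonneg (x : ℝ) (hx : Irrational x) (n : ℕ) : 0 ≤ rcfQp x n := by
  cases n with
  | zero => simp [rcfQp]
  | succ m => simpa [rcfQp] using le_trans (by norm_num) (rcfQ_pos x hx m)

lemma rcfQp_le (x : ℝ) (hx : Irrational x) (n : ℕ) : rcfQp x n ≤ rcfQ x n := by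
  cases n with
  | zero => simp [rcfQp, rcfQ]
  | succ m =>
    rw [rcfQp, rcfQ_rec]
    have h1 := rcfA_pos x hx m
    have h2 := rcfQ_pos x hx m
    have h3 := rcfQp_nonneg x hx m
    nlinarith

lemma rcfQ_mono (x : ℝ) (hx : Irrational x) : Monotone (rcfQ x) := by
  apply monotone_nat_of_le_succ
  intro n
  rw [rcfQ_rec]
  have h1 := rcfA_pos x hx n
  have h2 := rcfQ_pos x hx n
  have h3 := rcfQp_nonneg x hx n
  nlinarith

lemma rcfQ_succ_le (x : ℝ) (hx : Irrational x) (n : ℕ) :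
    rcfQ x (n + 1) ≤ 2 * rcfA x (n + 1) * rcfQ x n := by
  rw [rcfQ_rec]
  have h1 := rcfA_pos x hx n
  have h2 := rcfQ_pos x hx n
  have h3 := rcfQp_le x hx n
  nlinarith

lemma rcfQ_strict (x : ℝ) (hx : Irrational x) (n : ℕ) :
    rcfQ x (n + 1) < rcfQ x (n + 2) := by
  have hr : rcfQ x (n + 2) = rcfA x (n + 2) * rcfQ x (n + 1) + rcfQ x n :=
    rcfQ_rec x (n + 1)
  have h1 := rcfA_pos x hx (n + 1)
  have h2 := rcfQ_pos x hx (n + 1)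
  have h4 := rcfQ_pos x hx n
  rw [hr]
  nlinarith

/-- key identity -/
lemma cf_identity (x : ℝ) (hx : Irrational x) (n : ℕ) :
    x * (alp x n * rcfQ x n + rcfQp x n) = alp x n * rcfP x n + rcfPp x n := by
  induction n with
  | zero =>
    have h := cfX_pos x hx 0
    have hx0 : (rcfA x 0 : ℝ) + cfX x 0 = x := by
      rw [show rcfA x 0 = ⌊x⌋ from rfl, show cfX x 0 = Int.fract x from rfl]
      exact Int.floor_add_fract x
    have halp : alp x 0 * cfX x 0 = 1 := by
      rw [alp, one_div, inv_mul_cancel₀ (ne_of_gt h.1)]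
    rw [show rcfQ x 0 = 1 from rfl, show rcfQp x 0 = 0 from rfl,
      show rcfP x 0 = rcfA x 0 from rfl, show rcfPp x 0 = 1 from rfl]
    push_cast
    linear_combination alp x 0 * hx0.symm + halp
  | succ n ih =>
    have hgt := alp_gt_one x hx (n + 1)
    have hne : alp x (n + 1) ≠ 0 := by linarith
    have halp : alp x n = (rcfA x (n + 1) : ℝ) + 1 / alp x (n + 1) := by
      rw [alp_eq]
      congr 1
      rw [alp]
      rw [one_div_one_div]
    rw [halp] at ih
    have hQ : (rcfQ x (n+1) : ℝ) = (rcfA x (n+1) : ℝ) * rcfQ x n + rcfQp x n := by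
      rw [rcfQ_rec]; push_cast; ring
    have hP : (rcfP x (n+1) : ℝ) = (rcfA x (n+1) : ℝ) * rcfP x n + rcfPp x n := by
      rw [rcfP_rec]; push_cast; ring
    have hQp : (rcfQp x (n+1) : ℝ) = (rcfQ x n : ℝ) := by simp [rcfQp]
    have hPp : (rcfPp x (n+1) : ℝ) = (rcfP x n : ℝ) := by simp [rcfPp]
    rw [hQ, hP, hQp, hPp]
    field_simp at ih ⊢
    nlinarith [ih]

lemma cf_det (x : ℝ) (n : ℕ) :
    rcfP x n * rcfQp x n - rcfPp x n * rcfQ x n = (-1) ^ (n + 1) := by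
  induction n with
  | zero =>
    rw [show rcfQ x 0 = 1 from rfl, show rcfQp x 0 = 0 from rfl,
      show rcfP x 0 = rcfA x 0 from rfl, show rcfPp x 0 = 1 from rfl]
    ring
  | succ n ih =>
    rw [rcfP_rec, rcfQ_rec, show rcfQp x (n+1) = rcfQ x n from rfl,
      show rcfPp x (n+1) = rcfP x n from rfl]
    ring_nf
    ring_nf at ih
    linarith [ih]

/-- denominator of the error term -/
noncomputable def errD (x : ℝ) (n : ℕ) : ℝ := alp x n * rcfQ x n + rcfQp x n

lemma errD_pos (x : ℝ) (hx : Irrational x) (n : ℕ) : 0 < errD x n := by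
  have h1 := alp_gt_one x hx n
  have h2 := rcfQ_pos x hx n
  have h3 := rcfQp_nonneg x hx n
  have h2' : (1:ℝ) ≤ rcfQ x n := by exact_mod_cast h2
  have h3' : (0:ℝ) ≤ rcfQp x n := by exact_mod_cast h3
  rw [errD]; nlinarith

lemma errD_lb (x : ℝ) (hx : Irrational x) (n : ℕ) :
    (rcfQ x (n + 1) : ℝ) < errD x n := by
  have h1 := (alp_bounds x hx n).1
  have h2 := rcfQ_pos x hx n
  have h2' : (1:ℝ) ≤ rcfQ x n := by exact_mod_cast h2
  rw [errD, rcfQ_rec]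
  push_cast
  nlinarith

lemma errD_ub (x : ℝ) (hx : Irrational x) (n : ℕ) :
    errD x n < (rcfQ x (n + 1) : ℝ) + (rcfQ x n : ℝ) := by
  have h1 := (alp_bounds x hx n).2
  have h2 := rcfQ_pos x hx n
  have h2' : (1:ℝ) ≤ rcfQ x n := by exact_mod_cast h2
  rw [errD, rcfQ_rec]
  push_cast
  nlinarith

/-- error formula: q_n x - p_n = (-1)^n / errD n -/
lemma cf_err (x : ℝ) (hx : Irrational x) (n : ℕ) :
    (rcfQ x n : ℝ) * x - (rcfP x n : ℝ) = (-1) ^ n / errD x n := by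
  have hD := errD_pos x hx n
  have hid := cf_identity x hx n
  have hdet := cf_det x n
  have hdet' : (rcfP x n : ℝ) * rcfQp x n - rcfPp x n * rcfQ x n = (-1) ^ (n+1) := by
    exact_mod_cast congrArg (Int.cast : ℤ → ℝ) hdet
  rw [eq_div_iff (ne_of_gt hD), errD]
  linear_combination (rcfQ x n : ℝ) * hid - hdet'

lemma cf_coprime (x : ℝ) (n : ℕ) : Nat.Coprime (rcfP x n).natAbs (rcfQ x n).natAbs := by
  have hdet := cf_det x n
  have : IsCoprime (rcfP x n) (rcfQ x n) := by
    rcases Nat.even_or_odd n with he | ho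
    · refine ⟨-(rcfQp x n), rcfPp x n, ?_⟩
      have h1 : ((-1:ℤ)) ^ (n+1) = -1 := by
        rw [pow_succ, he.neg_one_pow]; ring
      rw [h1] at hdet; linarith [hdet]
    · refine ⟨rcfQp x n, -(rcfPp x n), ?_⟩
      have h1 : ((-1:ℤ)) ^ (n+1) = 1 := by
        rw [pow_succ, ho.neg_one_pow]; ring
      rw [h1] at hdet; linarith [hdet]
  rw [Nat.coprime_iff_gcd_eq_one, ← Int.gcd]
  exact Int.isCoprime_iff_gcd_eq_one.mp this

lemma abs_le_abs_add_of_mul_pos (u v : ℝ) (h : 0 < u * v) : |u| ≤ |u + v| := by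
  rcases mul_pos_iff.mp h with ⟨h1, h2⟩ | ⟨h1, h2⟩
  · rw [abs_of_pos h1, abs_of_pos (by linarith)]; linarith
  · rw [abs_of_neg h1, abs_of_neg (by linarith)]; linarith

/-- convergents are best approximations of the second kind -/
lemma cf_best (x : ℝ) (hx : Irrational x) (n : ℕ) (p q : ℤ) (hq1 : 1 ≤ q)
    (hq2 : q < rcfQ x (n + 1)) :
    |(rcfQ x n : ℝ) * x - (rcfP x n : ℝ)| ≤ |(q : ℝ) * x - (p : ℝ)| := by
  -- sign e with (-1)^n = e
  obtain ⟨e, he, he2⟩ : ∃ e : ℤ, ((-1:ℤ)) ^ n = e ∧ e * e = 1 := by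
    rcases Nat.even_or_odd n with h | h
    · exact ⟨1, h.neg_one_pow, by ring⟩
    · exact ⟨-1, h.neg_one_pow, by ring⟩
  have hdet : rcfP x (n+1) * rcfQ x n - rcfP x n * rcfQ x (n+1) = e := by
    have h := cf_det x (n+1)
    have h2 : ((-1:ℤ)) ^ (n+2) = e := by rw [pow_succ, pow_succ, he]; ring
    rw [show rcfQp x (n+1) = rcfQ x n from rfl, show rcfPp x (n+1) = rcfP x n from rfl,
      h2] at h
    exact h
  set a : ℤ := -e * (p * rcfQ x (n+1) - q * rcfP x (n+1)) with ha_def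
  set b : ℤ := -e * (q * rcfP x n - p * rcfQ x n) with hb_def
  have hap : a * rcfP x n + b * rcfP x (n+1) = p := by
    rw [ha_def, hb_def]; linear_combination e * p * hdet + p * he2
  have haq : a * rcfQ x n + b * rcfQ x (n+1) = q := by
    rw [ha_def, hb_def]; linear_combination e * q * hdet + q * he2
  -- real error terms
  have hDn := errD_pos x hx n
  have hDn1 := errD_pos x hx (n+1)
  have hcast : ((-1:ℝ)) ^ n = (e:ℝ) := by exact_mod_cast congrArg (Int.cast : ℤ → ℝ) he
  have hen : (rcfQ x n : ℝ) * x - (rcfP x n : ℝ) = (e : ℝ) / errD x n := by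
    rw [cf_err x hx n, hcast]
  have hen1 : (rcfQ x (n+1) : ℝ) * x - (rcfP x (n+1) : ℝ) = -(e : ℝ) / errD x (n+1) := by
    rw [cf_err x hx (n+1)]
    have h : ((-1:ℝ)) ^ (n+1) = -(e:ℝ) := by
      rw [pow_succ, hcast]; ring
    rw [h]
  have he2' : (e:ℝ) * e = 1 := by exact_mod_cast congrArg (Int.cast : ℤ → ℝ) he2
  have hmul : ((rcfQ x n : ℝ) * x - rcfP x n) * ((rcfQ x (n+1) : ℝ) * x - rcfP x (n+1)) < 0 := by
    rw [hen, hen1]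
    rw [div_mul_div_comm]
    apply div_neg_of_neg_of_pos
    · nlinarith
    · exact mul_pos hDn hDn1
  have hq_real : (q : ℝ) * x - p =
      (a : ℝ) * ((rcfQ x n : ℝ) * x - rcfP x n) + (b : ℝ) * ((rcfQ x (n+1) : ℝ) * x - rcfP x (n+1)) := by
    have h1 : ((a * rcfQ x n + b * rcfQ x (n+1) : ℤ) : ℝ) = (q:ℝ) :=
      congrArg (Int.cast : ℤ → ℝ) haq
    have h2 : ((a * rcfP x n + b * rcfP x (n+1) : ℤ) : ℝ) = (p:ℝ) :=
      congrArg (Int.cast : ℤ → ℝ) hap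
    push_cast at h1 h2
    linear_combination x * h1.symm - h2.symm
  have henne : (rcfQ x n : ℝ) * x - rcfP x n ≠ 0 := by
    rw [hen]
    have : (e:ℝ) ≠ 0 := by
      intro h; rw [h] at he2'; simp at he2'
    exact div_ne_zero this (ne_of_gt hDn)
  by_cases hb : b = 0
  · -- then q = a * Q n, a ≥ 1
    rw [hb] at haq hap
    simp at haq hap
    have hQn := rcfQ_pos x hx n
    have ha1 : 1 ≤ a := by nlinarith
    rw [hq_real, hb]
    push_cast
    rw [zero_mul, add_zero, abs_mul]
    have : (1:ℝ) ≤ |(a:ℝ)| := by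
      rw [abs_of_pos (by exact_mod_cast ha1 : (0:ℝ) < a)]
      exact_mod_cast ha1
    nlinarith [abs_nonneg ((rcfQ x n : ℝ) * x - rcfP x n)]
  · by_cases ha : a = 0
    · exfalso
      rw [ha] at haq
      simp at haq
      have hQ1 := rcfQ_pos x hx (n+1)
      rcases lt_trichotomy b 0 with h | h | h
      · nlinarith
      · exact hb h
      · nlinarith
    · -- a, b both nonzero: opposite signs
      have hQn := rcfQ_pos x hx n
      have hab : a * b < 0 := by
        rcases lt_trichotomy a 0 with h1 | h1 | h1
        · rcases lt_trichotomy b 0 with h2 | h2 | h2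
          · nlinarith  -- both neg: q < 0
          · exact absurd h2 hb
          · exact mul_neg_of_neg_of_pos h1 h2
        · exact absurd h1 ha
        · rcases lt_trichotomy b 0 with h2 | h2 | h2
          · exact mul_neg_of_pos_of_neg h1 h2
          · exact absurd h2 hb
          · nlinarith  -- both pos: q ≥ Qn + Q(n+1) > q contradiction
      have hprod : 0 < ((a:ℝ) * ((rcfQ x n : ℝ) * x - rcfP x n)) *
          ((b:ℝ) * ((rcfQ x (n+1) : ℝ) * x - rcfP x (n+1))) := by
        have : ((a:ℝ) * b) < 0 := by exact_mod_cast hab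
        nlinarith
      rw [hq_real]
      calc |(rcfQ x n : ℝ) * x - rcfP x n|
          ≤ |(a:ℝ)| * |(rcfQ x n : ℝ) * x - rcfP x n| := by
            have : (1:ℝ) ≤ |(a:ℝ)| := by
              have : 1 ≤ |a| := Int.one_le_abs ha
              exact_mod_cast this
            nlinarith [abs_nonneg ((rcfQ x n : ℝ) * x - rcfP x n)]
        _ = |(a:ℝ) * ((rcfQ x n : ℝ) * x - rcfP x n)| := (abs_mul _ _).symm
        _ ≤ |(a:ℝ) * ((rcfQ x n : ℝ) * x - rcfP x n) +
              (b:ℝ) * ((rcfQ x (n+1) : ℝ) * x - rcfP x (n+1))| :=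
            abs_le_abs_add_of_mul_pos _ _ hprod

lemma cf_abs_err (x : ℝ) (hx : Irrational x) (n : ℕ) :
    |(rcfQ x n : ℝ) * x - (rcfP x n : ℝ)| = 1 / errD x n := by
  rw [cf_err x hx n, abs_div, abs_pow, abs_neg, abs_one, one_pow,
    abs_of_pos (errD_pos x hx n)]

lemma cf_err_ub (x : ℝ) (hx : Irrational x) (n : ℕ) :
    |(rcfQ x n : ℝ) * x - (rcfP x n : ℝ)| < 1 / (rcfQ x (n + 1) : ℝ) := by
  rw [cf_abs_err x hx n]
  have h1 := errD_lb x hx n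
  have h2 : (0:ℝ) < (rcfQ x (n+1) : ℝ) := by
    exact_mod_cast lt_of_lt_of_le one_pos (rcfQ_pos x hx (n+1))
  exact one_div_lt_one_div_of_lt h2 h1

lemma cf_err_lb (x : ℝ) (hx : Irrational x) (n : ℕ) :
    1 / (2 * (rcfQ x (n + 1) : ℝ)) < |(rcfQ x n : ℝ) * x - (rcfP x n : ℝ)| := by
  rw [cf_abs_err x hx n]
  have h1 := errD_ub x hx n
  have h2 : (rcfQ x n : ℝ) ≤ (rcfQ x (n+1) : ℝ) := by
    exact_mod_cast rcfQ_mono x hx (Nat.le_succ n)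
  have h3 := errD_pos x hx n
  have h4 : (0:ℝ) < (rcfQ x (n+1) : ℝ) := by
    exact_mod_cast lt_of_lt_of_le one_pos (rcfQ_pos x hx (n+1))
  apply one_div_lt_one_div_of_lt h3
  linarith

lemma rcfQ_ge (x : ℝ) (hx : Irrational x) (n : ℕ) : (n : ℤ) ≤ rcfQ x (n + 1) := by
  induction n with
  | zero => simpa using le_trans (by norm_num) (rcfQ_pos x hx 1)
  | succ n ih =>
    have h := rcfQ_rec x (n + 1)
    have h1 := rcfA_pos x hx (n + 1)
    have h2 := rcfQ_pos x hx (n + 1)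
    have h3 : rcfQp x (n + 1) = rcfQ x n := rfl
    have h4 := rcfQ_pos x hx n
    rw [h, h3]
    push_cast
    nlinarith

lemma tendsto_rcfQ (x : ℝ) (hx : Irrational x) :
    Filter.Tendsto (fun n => (rcfQ x n : ℝ)) Filter.atTop Filter.atTop := by
  apply Filter.tendsto_atTop_mono' _ (f₁ := fun n : ℕ => (n : ℝ) - 1)
  · filter_upwards [Filter.eventually_ge_atTop 1] with n hn
    obtain ⟨m, rfl⟩ := Nat.exists_eq_add_of_le hn
    have := rcfQ_ge x hx m
    have : ((m : ℝ)) ≤ (rcfQ x (m + 1) : ℝ) := by exact_mod_cast this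
    have heq : 1 + m = m + 1 := by omega
    rw [heq]
    push_cast
    linarith
  · apply Filter.tendsto_atTop_add_const_right
    exact tendsto_natCast_atTop_atTop

lemma tendsto_log_rcfQ (x : ℝ) (hx : Irrational x) :
    Filter.Tendsto (fun n => Real.log (rcfQ x n)) Filter.atTop Filter.atTop :=
  Real.tendsto_log_atTop.comp (tendsto_rcfQ x hx)

/-- membership of a convergent pair in approxSet -/
lemma conv_mem (x : ℝ) (hx : Irrational x) (μ : ℝ) (n : ℕ)
    (h : ((rcfQ x n : ℝ)) ^ μ ≤ (rcfQ x n : ℝ) * (rcfQ x (n + 1) : ℝ)) :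
    (rcfP x n, (rcfQ x n).toNat) ∈ approxSet x μ := by
  have hQpos : (0:ℤ) < rcfQ x n := lt_of_lt_of_le one_pos (rcfQ_pos x hx n)
  have hQr : (0:ℝ) < (rcfQ x n : ℝ) := by exact_mod_cast hQpos
  have hQ1r : (0:ℝ) < (rcfQ x (n+1) : ℝ) := by
    exact_mod_cast lt_of_lt_of_le one_pos (rcfQ_pos x hx (n+1))
  have hcast : (((rcfQ x n).toNat : ℕ) : ℝ) = (rcfQ x n : ℝ) := by
    have h2 : ((rcfQ x n).toNat : ℤ) = rcfQ x n := Int.toNat_of_nonneg (le_of_lt hQpos)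
    exact_mod_cast h2
  refine ⟨?_, ?_, ?_⟩
  · simpa using hQpos
  · have h2 : (rcfQ x n).toNat = (rcfQ x n).natAbs := by omega
    show Nat.Coprime (rcfP x n).natAbs (rcfQ x n).toNat
    rw [h2]
    exact cf_coprime x n
  · show |x - (rcfP x n : ℝ) / (((rcfQ x n).toNat : ℕ) : ℝ)| <
      1 / (((rcfQ x n).toNat : ℕ) : ℝ) ^ μ
    rw [hcast]
    have h1 := cf_err_ub x hx n
    have e1 : (x - (rcfP x n : ℝ) / (rcfQ x n : ℝ)) * (rcfQ x n : ℝ)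
        = (rcfQ x n : ℝ) * x - (rcfP x n : ℝ) := by field_simp
    have hkey : |x - (rcfP x n : ℝ) / (rcfQ x n : ℝ)| * (rcfQ x n : ℝ)
        = |(rcfQ x n : ℝ) * x - (rcfP x n : ℝ)| := by
      rw [← e1, abs_mul, abs_of_pos hQr]
    have hlt : |x - (rcfP x n : ℝ) / (rcfQ x n : ℝ)| <
        1 / ((rcfQ x n : ℝ) * (rcfQ x (n+1) : ℝ)) := by
      rw [lt_div_iff₀ (by positivity)]
      calc |x - (rcfP x n : ℝ) / (rcfQ x n : ℝ)| * ((rcfQ x n : ℝ) * (rcfQ x (n+1) : ℝ))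
          = (|x - (rcfP x n : ℝ) / (rcfQ x n : ℝ)| * (rcfQ x n : ℝ)) * (rcfQ x (n+1) : ℝ) := by
            ring
        _ = |(rcfQ x n : ℝ) * x - (rcfP x n : ℝ)| * (rcfQ x (n+1) : ℝ) := by rw [hkey]
        _ < (1 / (rcfQ x (n+1) : ℝ)) * (rcfQ x (n+1) : ℝ) :=
            mul_lt_mul_of_pos_right h1 hQ1r
        _ = 1 := by field_simp
    exact lt_of_lt_of_le hlt (one_div_le_one_div_of_le (by positivity) h)

lemma approx_q_unbounded (x μ : ℝ) (h : (approxSet x μ).Infinite) (B : ℕ) :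
    ∃ pq ∈ approxSet x μ, B ≤ pq.2 := by
  by_contra hc
  push_neg at hc
  set Cr : ℝ := (B : ℝ) * (|x| + (B : ℝ) ^ |μ|) with hCr
  apply h
  apply Set.Finite.subset (Set.Finite.prod (Set.finite_Icc (-(⌈Cr⌉)) ⌈Cr⌉) (Set.finite_Iio B))
  rintro ⟨p, q⟩ hpq
  have hqB : q < B := hc (p, q) hpq
  obtain ⟨hq0, -, habs⟩ := hpq
  have hq0' : (0:ℝ) < (q:ℝ) := by exact_mod_cast hq0
  have hq1 : (1:ℝ) ≤ (q:ℝ) := by exact_mod_cast hq0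
  have hqB' : (q:ℝ) ≤ (B:ℝ) := by exact_mod_cast le_of_lt hqB
  -- bound 1/q^μ ≤ q^|μ| ≤ B^|μ|
  have h1 : (1:ℝ) / (q:ℝ) ^ μ = (q:ℝ) ^ (-μ) := by
    rw [Real.rpow_neg (le_of_lt hq0'), one_div]
  have h2 : (q:ℝ) ^ (-μ) ≤ (q:ℝ) ^ |μ| :=
    Real.rpow_le_rpow_of_exponent_le hq1 (neg_le_abs μ)
  have h3 : (q:ℝ) ^ |μ| ≤ (B:ℝ) ^ |μ| :=
    Real.rpow_le_rpow (le_of_lt hq0') hqB' (abs_nonneg μ)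
  have hbound : |(p:ℝ)| ≤ Cr := by
    have h4 : |(p:ℝ) / (q:ℝ)| ≤ |x| + 1 / (q:ℝ) ^ μ := by
      have := abs_sub_abs_le_abs_sub ((p:ℝ)/(q:ℝ)) x
      have h5 : |(p:ℝ)/(q:ℝ) - x| = |x - (p:ℝ)/(q:ℝ)| := abs_sub_comm _ _
      linarith [le_of_lt habs, this, h5.le]
    have h6 : |(p:ℝ)| = |(p:ℝ)/(q:ℝ)| * (q:ℝ) := by
      rw [abs_div, abs_of_pos hq0']
      field_simp
    rw [h6, hCr]
    have h7 : |(p:ℝ)/(q:ℝ)| ≤ |x| + (B:ℝ) ^ |μ| := by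
      calc |(p:ℝ)/(q:ℝ)| ≤ |x| + 1 / (q:ℝ) ^ μ := h4
        _ ≤ |x| + (B:ℝ) ^ |μ| := by rw [h1]; linarith
    have h8 : (0:ℝ) ≤ |x| + (B:ℝ) ^ |μ| := by positivity
    calc |(p:ℝ)/(q:ℝ)| * (q:ℝ) ≤ (|x| + (B:ℝ) ^ |μ|) * (q:ℝ) :=
          mul_le_mul_of_nonneg_right h7 (le_of_lt hq0')
      _ ≤ (|x| + (B:ℝ) ^ |μ|) * (B:ℝ) := mul_le_mul_of_nonneg_left hqB' h8
      _ = (B:ℝ) * (|x| + (B:ℝ) ^ |μ|) := by ring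
  constructor
  · -- p ∈ Icc
    have habs2 : |(p:ℝ)| ≤ (⌈Cr⌉ : ℝ) := le_trans hbound (Int.le_ceil Cr)
    have : |p| ≤ ⌈Cr⌉ := by exact_mod_cast habs2
    simp only [Set.mem_Icc]
    exact abs_le.mp this
  · exact hqB

lemma rcfQ_lt (x : ℝ) (hx : Irrational x) {m n : ℕ} (h1 : 1 ≤ m) (h2 : m < n) :
    rcfQ x m < rcfQ x n := by
  have hs : rcfQ x ((m - 1) + 1) < rcfQ x ((m - 1) + 2) := rcfQ_strict x hx (m - 1)
  have hm : m - 1 + 1 = m := by omega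
  rw [hm] at hs
  exact lt_of_lt_of_le hs (rcfQ_mono x hx (by omega))

/-- index location: for q ≥ 1 there is n with Q n ≤ q < Q (n+1) -/
lemma exists_index (x : ℝ) (hx : Irrational x) (q : ℤ) (hq : 1 ≤ q) :
    ∃ n, rcfQ x n ≤ q ∧ q < rcfQ x (n + 1) := by
  have hex : ∃ m, q < rcfQ x (m + 1) := by
    refine ⟨q.toNat + 1, ?_⟩
    have h1 := rcfQ_ge x hx (q.toNat + 1)
    have h2 : (q.toNat : ℤ) = q := Int.toNat_of_nonneg (by omega)
    push_cast at h1
    omega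
  classical
  refine ⟨Nat.find hex, ?_, Nat.find_spec hex⟩
  by_cases h0 : Nat.find hex = 0
  · rw [h0, show rcfQ x 0 = 1 from rfl]; exact hq
  · obtain ⟨m, hm⟩ := Nat.exists_eq_succ_of_ne_zero h0
    have hmin := Nat.find_min hex (by omega : m < Nat.find hex)
    push_neg at hmin
    rw [hm]; exact hmin

/-- core inequality for the upper bound on the irrationality exponent -/
lemma key_upper (x : ℝ) (hx : Irrational x) (μ : ℝ) (hμ : 2 < μ) (p : ℤ) (q : ℕ)
    (hmem : (p, q) ∈ approxSet x μ) (n : ℕ) (hn1 : rcfQ x n ≤ (q:ℤ))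
    (hn2 : (q:ℤ) < rcfQ x (n + 1)) :
    (μ - 2) * Real.log (rcfQ x n) - Real.log 4 < Real.log (rcfA x (n + 1)) := by
  obtain ⟨hq0, -, habs⟩ := hmem
  have hq0' : (0:ℝ) < (q:ℝ) := by exact_mod_cast hq0
  have hQr : (0:ℝ) < (rcfQ x n : ℝ) := by
    exact_mod_cast lt_of_lt_of_le one_pos (rcfQ_pos x hx n)
  have hQ1r : (0:ℝ) < (rcfQ x (n+1) : ℝ) := by
    exact_mod_cast lt_of_lt_of_le one_pos (rcfQ_pos x hx (n+1))
  have hAr : (1:ℝ) ≤ (rcfA x (n+1) : ℝ) := by exact_mod_cast rcfA_pos x hx n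
  have hqQ : (rcfQ x n : ℝ) ≤ (q:ℝ) := by exact_mod_cast hn1
  -- |q x - p| < q / q^μ = q^(1-μ)
  have e1 : (x - (p:ℝ) / (q:ℝ)) * (q:ℝ) = (q:ℝ) * x - (p:ℝ) := by field_simp
  have hkey : |x - (p:ℝ) / (q:ℝ)| * (q:ℝ) = |(q:ℝ) * x - (p:ℝ)| := by
    rw [← e1, abs_mul, abs_of_pos hq0']
  have hub : |(q:ℝ) * x - (p:ℝ)| < (q:ℝ) ^ (1 - μ) := by
    have h2 : |x - (p:ℝ)/(q:ℝ)| * (q:ℝ) < (1 / (q:ℝ) ^ μ) * (q:ℝ) :=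
      mul_lt_mul_of_pos_right habs hq0'
    rw [hkey] at h2
    calc |(q:ℝ) * x - (p:ℝ)| < (1 / (q:ℝ) ^ μ) * (q:ℝ) := h2
      _ = (q:ℝ) ^ (1:ℝ) / (q:ℝ) ^ μ := by rw [Real.rpow_one]; ring
      _ = (q:ℝ) ^ (1 - μ) := by rw [← Real.rpow_sub hq0']
  -- best approximation from below
  have hbest := cf_best x hx n p (q:ℤ) (by exact_mod_cast hq0) hn2
  have hlb := cf_err_lb x hx n
  have hcast : ((q:ℤ):ℝ) = (q:ℝ) := by push_cast; ring
  rw [hcast] at hbest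
  have hchain : 1 / (2 * (rcfQ x (n+1) : ℝ)) < (q:ℝ) ^ (1 - μ) :=
    lt_of_le_of_lt (le_trans (le_of_lt hlb) hbest) hub
  -- q^(1-μ) ≤ Q_n^(1-μ)
  have hmono : (q:ℝ) ^ (1 - μ) ≤ (rcfQ x n : ℝ) ^ (1 - μ) :=
    Real.rpow_le_rpow_of_nonpos hQr hqQ (by linarith)
  have h3 : 1 / (2 * (rcfQ x (n+1) : ℝ)) < (rcfQ x n : ℝ) ^ (1 - μ) :=
    lt_of_lt_of_le hchain hmono
  -- rearrange: Q_n^(μ-1) < 2 Q_{n+1}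
  have h4 : (rcfQ x n : ℝ) ^ (μ - 1) < 2 * (rcfQ x (n+1) : ℝ) := by
    have hinv : (rcfQ x n : ℝ) ^ (1 - μ) = 1 / (rcfQ x n : ℝ) ^ (μ - 1) := by
      rw [show (1 - μ) = -(μ - 1) by ring, Real.rpow_neg (le_of_lt hQr), one_div]
    rw [hinv, div_lt_div_iff₀ (by positivity) (by positivity)] at h3
    have hpos : (0:ℝ) < (rcfQ x n : ℝ) ^ (μ - 1) := by positivity
    nlinarith
  -- Q_{n+1} ≤ 2 A_{n+1} Q_n
  have h5 : (rcfQ x (n+1) : ℝ) ≤ 2 * (rcfA x (n+1) : ℝ) * (rcfQ x n : ℝ) := by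
    exact_mod_cast rcfQ_succ_le x hx n
  have h6 : (rcfQ x n : ℝ) ^ (μ - 1) < 4 * (rcfA x (n+1) : ℝ) * (rcfQ x n : ℝ) := by
    nlinarith
  -- divide by Q_n
  have h7 : (rcfQ x n : ℝ) ^ (μ - 2) < 4 * (rcfA x (n+1) : ℝ) := by
    have hsub : (rcfQ x n : ℝ) ^ (μ - 2) = (rcfQ x n : ℝ) ^ (μ - 1) / (rcfQ x n : ℝ) := by
      rw [show μ - 2 = (μ - 1) - 1 by ring, Real.rpow_sub hQr, Real.rpow_one]
    rw [hsub, div_lt_iff₀ hQr]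
    nlinarith
  -- take logs
  have h8 := Real.log_lt_log (by positivity) h7
  rw [Real.log_rpow hQr, Real.log_mul (by norm_num) (by linarith)] at h8
  linarith

lemma ereal_lt_shift (r : ℝ) (L : EReal) (h : (r:EReal) < 2 + L) : ((r - 2:ℝ):EReal) < L := by
  induction L using EReal.rec with
  | bot => simp at h
  | coe l =>
    rw [show (2:EReal) + (l:EReal) = ((2+l:ℝ):EReal) by norm_cast] at h
    rw [EReal.coe_lt_coe_iff] at h ⊢
    linarith
  | top => exact EReal.coe_lt_top _

lemma ereal_shift_le (μ : ℝ) (L : EReal) (h : ((μ - 2:ℝ):EReal) ≤ L) : (μ:EReal) ≤ 2 + L := by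
  calc (μ:EReal) = ((2:ℝ):EReal) + ((μ-2:ℝ):EReal) := by norm_cast; ring
    _ ≤ ((2:ℝ):EReal) + L := add_le_add le_rfl h
    _ = 2 + L := by norm_cast

lemma rcfQ_two (x : ℝ) (hx : Irrational x) (n : ℕ) (hn : 2 ≤ n) : (2:ℤ) ≤ rcfQ x n := by
  have h2 : rcfQ x 2 = rcfA x 2 * rcfQ x 1 + rcfQ x 0 := rcfQ_rec x 1
  have := rcfA_pos x hx 1
  have := rcfQ_pos x hx 1
  have h0 : rcfQ x 0 = 1 := rfl
  have : (2:ℤ) ≤ rcfQ x 2 := by rw [h2, h0]; nlinarith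
  exact le_trans this (rcfQ_mono x hx hn)

lemma F_injOn (x : ℝ) (hx : Irrational x) (S : Set ℕ) (hS : ∀ n ∈ S, 1 ≤ n) :
    Set.InjOn (fun n => (rcfP x n, (rcfQ x n).toNat)) S := by
  intro m hm n hn h
  have h2 : (rcfQ x m).toNat = (rcfQ x n).toNat := congrArg Prod.snd h
  have h3 : rcfQ x m = rcfQ x n := by
    have := rcfQ_pos x hx m
    have := rcfQ_pos x hx n
    omega
  by_contra hne
  rcases lt_or_gt_of_ne hne with hlt | hlt
  · exact absurd h3 (ne_of_lt (rcfQ_lt x hx (hS m hm) hlt))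
  · exact absurd h3.symm (ne_of_lt (rcfQ_lt x hx (hS n hn) hlt))

/-- the convergent pairs with index in an infinite set of indices (≥ 2) witness
that `approxSet` is infinite -/
lemma approx_infinite_of_indices (x : ℝ) (hx : Irrational x) (μ : ℝ) (S : Set ℕ)
    (hSinf : S.Infinite) (hS2 : ∀ n ∈ S, 2 ≤ n)
    (hgood : ∀ n ∈ S, ((rcfQ x n : ℝ)) ^ μ ≤ (rcfQ x n : ℝ) * (rcfQ x (n + 1) : ℝ)) :
    (approxSet x μ).Infinite := by
  have hinj := F_injOn x hx S (fun n hn => le_trans (by norm_num) (hS2 n hn))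
  have himg : ((fun n => (rcfP x n, (rcfQ x n).toNat)) '' S).Infinite := hSinf.image hinj
  apply himg.mono
  rintro _ ⟨n, hn, rfl⟩
  exact conv_mem x hx μ n (hgood n hn)


theorem stmt4 (x : ℝ) (hx : Irrational x) :
    irrExp x = 2 + Filter.limsup
      (fun n : ℕ =>
        ((Real.log ((rcfA x (n + 1) : ℝ)) / Real.log ((rcfQ x n : ℝ)) : ℝ) : EReal))
      Filter.atTop := by
  set s : ℕ → EReal := fun n : ℕ =>
    ((Real.log ((rcfA x (n + 1) : ℝ)) / Real.log ((rcfQ x n : ℝ)) : ℝ) : EReal) with hs_def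
  set L := Filter.limsup s Filter.atTop with hL_def
  -- positivity facts
  have hQr : ∀ n, (0:ℝ) < (rcfQ x n : ℝ) := fun n => by
    exact_mod_cast lt_of_lt_of_le one_pos (rcfQ_pos x hx n)
  have hAr : ∀ n, (1:ℝ) ≤ (rcfA x (n+1) : ℝ) := fun n => by
    exact_mod_cast rcfA_pos x hx n
  have hlogQ : ∀ n, 2 ≤ n → 0 < Real.log (rcfQ x n) := by
    intro n hn
    apply Real.log_pos
    have := rcfQ_two x hx n hn
    exact_mod_cast lt_of_lt_of_le one_lt_two (by exact_mod_cast this)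
  have hlogA : ∀ n, 0 ≤ Real.log (rcfA x (n+1)) := fun n =>
    Real.log_nonneg (hAr n)
  -- L ≥ 0
  have hL0 : (0:EReal) ≤ L := by
    apply Filter.le_limsup_of_frequently_le _ (by isBoundedDefault)
    apply Filter.Eventually.frequently
    filter_upwards [Filter.eventually_ge_atTop 2] with n hn
    rw [hs_def]
    show ((0:ℝ):EReal) ≤ _
    rw [EReal.coe_le_coe_iff]
    exact div_nonneg (hlogA n) (le_of_lt (hlogQ n hn))
  apply le_antisymm
  · -- irrExp ≤ 2 + L
    apply sSup_le
    rintro e ⟨μ, rfl, hinf⟩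
    rcases le_or_gt μ 2 with hμ | hμ
    · calc (μ:EReal) ≤ ((2:ℝ):EReal) := EReal.coe_le_coe_iff.mpr hμ
        _ = 2 + (0:EReal) := by norm_cast
        _ ≤ 2 + L := add_le_add le_rfl hL0
    · apply ereal_shift_le
      by_contra hcon
      push_neg at hcon
      obtain ⟨r, hr1, hr2⟩ := EReal.exists_between_coe_real hcon
      rw [EReal.coe_lt_coe_iff] at hr2
      refine absurd (Filter.le_limsup_of_frequently_le ?_ (by isBoundedDefault))
        (not_le.mpr hr1)
      rw [Filter.frequently_atTop]
      intro M
      set ε := μ - 2 - r with hε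
      have hε0 : 0 < ε := by rw [hε]; linarith
      set T : ℝ := max 2 (Real.exp (Real.log 4 / ε)) with hT
      obtain ⟨N, hN⟩ := Filter.eventually_atTop.mp ((tendsto_rcfQ x hx).eventually_ge_atTop T)
      set M' := max M N with hM'
      have hQM' : T ≤ (rcfQ x M' : ℝ) := hN M' (le_max_right _ _)
      -- get a pair with large q
      obtain ⟨⟨p, q⟩, hmem, hqB⟩ := approx_q_unbounded x μ hinf (rcfQ x M').toNat
      have hq0 : 0 < q := hmem.1
      obtain ⟨n, hn1, hn2⟩ := exists_index x hx (q:ℤ) (by exact_mod_cast hq0)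
      have hQM'q : rcfQ x M' ≤ (q:ℤ) := by
        have h1 : ((rcfQ x M').toNat : ℤ) = rcfQ x M' :=
          Int.toNat_of_nonneg (by linarith [rcfQ_pos x hx M'])
        omega
      -- n ≥ M'
      have hnM' : M' ≤ n := by
        by_contra hc
        push_neg at hc
        have := rcfQ_mono x hx (by omega : n + 1 ≤ M')
        omega
      have hQnT : T ≤ (rcfQ x n : ℝ) := by
        refine le_trans hQM' ?_
        exact_mod_cast rcfQ_mono x hx hnM'
      have hQn2 : (2:ℝ) ≤ (rcfQ x n : ℝ) := le_trans (le_max_left _ _) hQnT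
      have hlogQn : 0 < Real.log (rcfQ x n) := Real.log_pos (by linarith)
      have hkey := key_upper x hx μ hμ p q hmem n hn1 hn2
      have hlog4 : Real.log 4 ≤ ε * Real.log (rcfQ x n) := by
        have h1 : Real.log 4 / ε ≤ Real.log (rcfQ x n) := by
          calc Real.log 4 / ε = Real.log (Real.exp (Real.log 4 / ε)) :=
                (Real.log_exp _).symm
            _ ≤ Real.log (rcfQ x n) :=
                Real.log_le_log (Real.exp_pos _) (le_trans (le_max_right _ _) hQnT)
        rw [div_le_iff₀ hε0] at h1
        linarith [h1]
      have hfin : r * Real.log (rcfQ x n) ≤ Real.log (rcfA x (n+1)) := by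
        have : μ - 2 - ε = r := by rw [hε]; ring
        nlinarith [hkey, hlog4, hlogQn]
      refine ⟨n, le_trans (le_max_left M N) hnM', ?_⟩
      show ((r:ℝ):EReal) ≤ s n
      rw [hs_def, EReal.coe_le_coe_iff]
      rw [le_div_iff₀ hlogQn]
      exact hfin
  · -- 2 + L ≤ irrExp
    by_contra hcon
    obtain ⟨r, hr1, hr2⟩ := EReal.exists_between_coe_real (not_le.mp hcon)
    have hinf : (approxSet x r).Infinite := by
      rcases le_or_gt r 2 with hr | hr
      · -- r ≤ 2 : all convergents n ≥ 2 work
        refine approx_infinite_of_indices x hx r (Set.Ici 2) (Set.Ici_infinite 2)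
          (fun n hn => hn) (fun n hn => ?_)
        have hQn2 : (2:ℝ) ≤ (rcfQ x n : ℝ) := by exact_mod_cast rcfQ_two x hx n hn
        have hQQ : (rcfQ x n : ℝ) ≤ (rcfQ x (n+1) : ℝ) := by
          exact_mod_cast rcfQ_mono x hx (Nat.le_succ n)
        calc (rcfQ x n : ℝ) ^ r ≤ (rcfQ x n : ℝ) ^ (2:ℝ) :=
              Real.rpow_le_rpow_of_exponent_le (by linarith) hr
          _ = (rcfQ x n : ℝ) * (rcfQ x n : ℝ) := by
              rw [show (2:ℝ) = ((2:ℕ):ℝ) by norm_num, Real.rpow_natCast]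
              ring
          _ ≤ (rcfQ x n : ℝ) * (rcfQ x (n+1) : ℝ) := by nlinarith [hQr n]
      · -- 2 < r
        have hrL : ((r - 2:ℝ):EReal) < L := ereal_lt_shift r L hr2
        have hfreq := Filter.frequently_lt_of_lt_limsup (by isBoundedDefault) hrL
        have hfreq2 : ∃ᶠ n in Filter.atTop,
            (((r - 2:ℝ):EReal) < s n ∧ 2 ≤ n) :=
          hfreq.and_eventually (Filter.eventually_ge_atTop 2)
        refine approx_infinite_of_indices x hx r _
          (Nat.frequently_atTop_iff_infinite.mp hfreq2) (fun n hn => hn.2) ?_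
        rintro n ⟨hsn, hn2⟩
        have hQn2 : (2:ℝ) ≤ (rcfQ x n : ℝ) := by exact_mod_cast rcfQ_two x hx n hn2
        have hlogQn : 0 < Real.log (rcfQ x n) := Real.log_pos (by linarith)
        rw [hs_def, EReal.coe_lt_coe_iff, lt_div_iff₀ hlogQn] at hsn
        -- A_{n+1} > Q_n ^ (r-2)
        have hA : (rcfQ x n : ℝ) ^ (r - 2) < (rcfA x (n+1) : ℝ) := by
          have h1 : (rcfQ x n : ℝ) ^ (r - 2) = Real.exp ((r-2) * Real.log (rcfQ x n)) := by
            rw [Real.rpow_def_of_pos (hQr n), mul_comm]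
          have h2 : (rcfA x (n+1) : ℝ) = Real.exp (Real.log (rcfA x (n+1))) :=
            (Real.exp_log (by linarith [hAr n])).symm
          rw [h1, h2]
          exact Real.exp_lt_exp.mpr hsn
        -- Q_{n+1} ≥ A_{n+1} Q_n
        have hQ1 : (rcfA x (n+1) : ℝ) * (rcfQ x n : ℝ) ≤ (rcfQ x (n+1) : ℝ) := by
          have h := rcfQ_rec x n
          have h2 := rcfQp_nonneg x hx n
          have : rcfA x (n+1) * rcfQ x n ≤ rcfQ x (n+1) := by omega
          exact_mod_cast this
        calc (rcfQ x n : ℝ) ^ r = (rcfQ x n : ℝ) ^ (r - 2) *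
                ((rcfQ x n : ℝ) * (rcfQ x n : ℝ)) := by
              rw [show r = (r - 2) + 2 by ring, Real.rpow_add (hQr n),
                show ((r:ℝ) - 2 + 2 - 2) = r - 2 by ring,
                show (2:ℝ) = ((2:ℕ):ℝ) by norm_num, Real.rpow_natCast]
              ring
          _ ≤ ((rcfA x (n+1) : ℝ) * (rcfQ x n : ℝ)) * (rcfQ x n : ℝ) := by
              nlinarith [hQr n, hA]
          _ ≤ (rcfQ x (n+1) : ℝ) * (rcfQ x n : ℝ) := by nlinarith [hQr n, hQ1]
          _ = (rcfQ x n : ℝ) * (rcfQ x (n+1) : ℝ) := by ring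

    have hle : ((r:ℝ):EReal) ≤ irrExp x := by
      simp only [irrExp]
      exact le_sSup ⟨r, rfl, hinf⟩
    exact absurd hle (not_le.mpr hr1)
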